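/- Let n be odd and let L be an n-dimensional complex vector space with basis y₁,…,yₙ equipped with the bracket [yᵢ,y₁] = y_{i+1} for 1 ≤ i ≤ n-2, [yᵢ,yₙ] = y_{(n+1)/2 + i - 1} for 1 ≤ i ≤ (n-1)/2, [yₙ,yₙ] = α·y_{n-1} with α ≠ 0, all other products of basis vectors being zero. Then L is a Leibniz algebra. -/
import Mathlib


/-- The algebra M₂ (n odd): [yᵢ,y₁] = y_{i+1} for 1 ≤ i ≤ n-2,
[yᵢ,yₙ] = y_{(n+1)/2+i-1} for 1 ≤ i ≤ (n-1)/2, [yₙ,yₙ] = α·y_{n-1} (α ≠ 0),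
all other products of basis vectors zero.  This bracket satisfies the
Leibniz identity. -/
theorem M2_is_Leibniz
    (n : ℕ) (hn : 3 ≤ n) (hodd : Odd n)
    (V : Type*) [AddCommGroup V] [Module ℂ V]
    (y : ℕ → V)
    (hindep : LinearIndependent ℂ (fun i : Fin n => y (i.val + 1)))
    (hspan : Submodule.span ℂ (Set.range (fun i : Fin n => y (i.val + 1))) = ⊤)
    (α : ℂ) (hα : α ≠ 0)
    (B : V →ₗ[ℂ] V →ₗ[ℂ] V)
    (h1 : ∀ i, 1 ≤ i → i ≤ n - 2 → B (y i) (y 1) = y (i + 1))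
    (h2 : ∀ i, 1 ≤ i → i ≤ (n - 1) / 2 → B (y i) (y n) = y ((n + 1) / 2 + i - 1))
    (h3 : B (y n) (y n) = α • y (n - 1))
    (h0 : ∀ i j, 1 ≤ i → i ≤ n → 1 ≤ j → j ≤ n →
      ¬(j = 1 ∧ i ≤ n - 2) → ¬(j = n ∧ i ≤ (n - 1) / 2) → ¬(i = n ∧ j = n) →
      B (y i) (y j) = 0) :
    ∀ x u z : V, B x (B u z) = B (B x u) z - B (B x z) u := by
  obtain ⟨m, hm⟩ := hodd
  have h2' : ∀ i, 1 ≤ i → i ≤ m → B (y i) (y n) = y (m + i) := by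
    intro i hi1 hi2
    have := h2 i hi1 (by omega)
    rwa [show (n + 1) / 2 + i - 1 = m + i by omega] at this
  have h3' : B (y n) (y n) = α • y (2 * m) := by
    rwa [show n - 1 = 2 * m by omega] at h3
  have hmid : ∀ i t, 1 ≤ i → i ≤ n → 2 ≤ t → t ≤ n - 1 → B (y i) (y t) = 0 := by
    intro i t hi1 hi2 ht1 ht2
    exact h0 i t hi1 hi2 (by omega) (by omega) (by omega) (by omega) (by omega)
  have hinner : ∀ j k, 1 ≤ j → j ≤ n → 1 ≤ k → k ≤ n →
      ∃ (c : ℂ) (t : ℕ), 2 ≤ t ∧ t ≤ n - 1 ∧ B (y j) (y k) = c • y t := by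
    intro j k hj1 hj2 hk1 hk2
    by_cases hA : k = 1 ∧ j ≤ n - 2
    · exact ⟨1, j + 1, by omega, by omega, by rw [hA.1, h1 j hj1 hA.2, one_smul]⟩
    by_cases hB : k = n ∧ j ≤ m
    · exact ⟨1, m + j, by omega, by omega, by rw [hB.1, h2' j hj1 hB.2, one_smul]⟩
    by_cases hC : j = n ∧ k = n
    · exact ⟨α, 2 * m, by omega, by omega, by rw [hC.1, hC.2, h3']⟩
    · refine ⟨0, 2, by omega, by omega, ?_⟩
      rw [h0 j k hj1 hj2 hk1 hk2 (by omega) (by omega) hC, zero_smul]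
  have feval : ∀ i j k, 1 ≤ i → i ≤ n → 1 ≤ j → j ≤ n → 1 ≤ k → k ≤ n →
      B (B (y i) (y j)) (y k) =
        if j = 1 ∧ k = 1 ∧ i ≤ n - 3 then y (i + 2)
        else if (j = 1 ∧ k = n ∨ j = n ∧ k = 1) ∧ i + 1 ≤ m then y (m + i + 1)
        else 0 := by
    intro i j k hi1 hi2 hj1 hj2 hk1 hk2
    by_cases hj : j = 1
    · subst hj
      by_cases hi' : i ≤ n - 2
      · rw [h1 i hi1 hi']
        by_cases hk : k = 1
        · subst hk
          by_cases hii : i + 1 ≤ n - 2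
          · rw [h1 (i + 1) (by omega) hii, if_pos (by omega)]
          · rw [h0 (i + 1) 1 (by omega) (by omega) (by omega) (by omega) (by omega)
                (by omega) (by omega), if_neg (by omega), if_neg (by omega)]
        · by_cases hkn : k = n
          · rw [hkn]
            by_cases hii : i + 1 ≤ m
            · rw [h2' (i + 1) (by omega) hii, if_neg (by omega), if_pos (by omega)]
              exact congrArg y (by omega)
            · rw [h0 (i + 1) n (by omega) (by omega) (by omega) (by omega) (by omega)
                  (by omega) (by omega), if_neg (by omega), if_neg (by omega)]
          · rw [h0 (i + 1) k (by omega) (by omega) hk1 hk2 (by omega) (by omega)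
                (by omega), if_neg (by omega), if_neg (by omega)]
      · rw [h0 i 1 hi1 hi2 (by omega) (by omega) (by omega) (by omega) (by omega),
            map_zero, LinearMap.zero_apply, if_neg (by omega), if_neg (by omega)]
    · by_cases hjn : j = n
      · rw [hjn]
        by_cases him : i ≤ m
        · rw [h2' i hi1 him]
          by_cases hk : k = 1
          · subst hk
            by_cases hii : i + 1 ≤ m
            · rw [h1 (m + i) (by omega) (by omega), if_neg (by omega), if_pos (by omega)]
            · rw [h0 (m + i) 1 (by omega) (by omega) (by omega) (by omega) (by omega)
                  (by omega) (by omega), if_neg (by omega), if_neg (by omega)]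
          · rw [h0 (m + i) k (by omega) (by omega) hk1 hk2 (by omega) (by omega)
                (by omega), if_neg (by omega), if_neg (by omega)]
        · by_cases hin : i = n
          · rw [hin]
            rw [h3', map_smul, LinearMap.smul_apply,
              h0 (2 * m) k (by omega) (by omega) hk1 hk2 (by omega) (by omega) (by omega),
              smul_zero, if_neg (by omega), if_neg (by omega)]
          · rw [h0 i n hi1 hi2 (by omega) (by omega) (by omega) (by omega) (by omega),
              map_zero, LinearMap.zero_apply, if_neg (by omega), if_neg (by omega)]
      · rw [h0 i j hi1 hi2 hj1 hj2 (by omega) (by omega) (by omega),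
          map_zero, LinearMap.zero_apply, if_neg (by omega), if_neg (by omega)]
  have key : ∀ i j k, 1 ≤ i → i ≤ n → 1 ≤ j → j ≤ n → 1 ≤ k → k ≤ n →
      B (y i) (B (y j) (y k)) = B (B (y i) (y j)) (y k) - B (B (y i) (y k)) (y j) := by
    intro i j k hi1 hi2 hj1 hj2 hk1 hk2
    obtain ⟨c, t, ht1, ht2, hBt⟩ := hinner j k hj1 hj2 hk1 hk2
    rw [hBt, map_smul, hmid i t hi1 hi2 ht1 ht2, smul_zero,
      feval i j k hi1 hi2 hj1 hj2 hk1 hk2, feval i k j hi1 hi2 hk1 hk2 hj1 hj2]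
    split_ifs <;> first | (exact (sub_self _).symm) | omega
  have hmem : ∀ v : V, v ∈ Submodule.span ℂ (Set.range fun i : Fin n => y (i.val + 1)) := by
    intro v; rw [hspan]; trivial
  -- Step 1: basis x, basis u, all z
  have step1 : ∀ i j, 1 ≤ i → i ≤ n → 1 ≤ j → j ≤ n → ∀ z : V,
      B (y i) (B (y j) z) = B (B (y i) (y j)) z - B (B (y i) z) (y j) := by
    intro i j hi1 hi2 hj1 hj2 z
    induction hmem z using Submodule.span_induction with
    | mem v hv =>
      obtain ⟨k, rfl⟩ := hv
      exact key i j (k.val + 1) hi1 hi2 hj1 hj2 (by omega) (by omega : k.val + 1 ≤ n)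
    | zero => simp
    | add a b _ _ iha ihb =>
      simp only [map_add, LinearMap.add_apply, iha, ihb]; abel
    | smul c a _ ih =>
      simp only [map_smul, LinearMap.smul_apply, ih, smul_sub]
  -- Step 2: basis x, all u, all z
  have step2 : ∀ i, 1 ≤ i → i ≤ n → ∀ u z : V,
      B (y i) (B u z) = B (B (y i) u) z - B (B (y i) z) u := by
    intro i hi1 hi2 u z
    induction hmem u using Submodule.span_induction with
    | mem v hv =>
      obtain ⟨j, rfl⟩ := hv
      exact step1 i (j.val + 1) hi1 hi2 (by omega) (by omega : j.val + 1 ≤ n) z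
    | zero => simp
    | add a b _ _ iha ihb =>
      simp only [map_add, LinearMap.add_apply, iha, ihb]; abel
    | smul c a _ ih =>
      simp only [map_smul, LinearMap.smul_apply, ih, smul_sub]
  intro x u z
  induction hmem x using Submodule.span_induction with
  | mem v hv =>
    obtain ⟨i, rfl⟩ := hv
    exact step2 (i.val + 1) (by omega) (by omega : i.val + 1 ≤ n) u z
  | zero => simp
  | add a b _ _ iha ihb =>
    simp only [map_add, LinearMap.add_apply, iha, ihb]; abel
  | smul c a _ ih =>
    simp only [map_smul, LinearMap.smul_apply, ih, smul_sub]
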